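/- Let Δ be an uncountable set and Δ⁺ = Δ ∪ {∞} its one-point compactification (Δ discrete). Every uncountable subset of the lexicographically ordered square [0,1]² (with the order topology) has at least two cluster points; consequently [0,1]² with the lexicographic order topology contains no homeomorphic copy of Δ⁺. -/

import Mathlib

open Filter

/-- The lexicographically ordered unit square with its order topology. -/
abbrev LexSquare : Type := Lex (Set.Icc (0:ℝ) 1 × Set.Icc (0:ℝ) 1)

noncomputable instance : TopologicalSpace LexSquare := Preorder.topology LexSquare

instance : OrderTopology LexSquare := ⟨rfl⟩

open Set Topology

/-- If every left-neighborhood of `x` contains a point of `S` strictly between, then `x`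
is an accumulation point of `S`. -/
lemma accPt_of_left {α : Type*} [LinearOrder α] [TopologicalSpace α] [OrderTopology α]
    {x : α} {S : Set α} (h : ∀ l < x, ∃ p ∈ S, l < p ∧ p < x) (hl : ∃ l, l < x) :
    AccPt x (𝓟 S) := by
  rw [accPt_iff_nhds]
  intro U hU
  obtain ⟨l, hlx, hsub⟩ := exists_Ioc_subset_of_mem_nhds hU hl
  obtain ⟨p, hpS, hlp, hpx⟩ := h l hlx
  exact ⟨p, ⟨hsub ⟨hlp, hpx.le⟩, hpS⟩, hpx.ne⟩

lemma accPt_of_right {α : Type*} [LinearOrder α] [TopologicalSpace α] [OrderTopology α]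
    {x : α} {S : Set α} (h : ∀ u, x < u → ∃ p ∈ S, x < p ∧ p < u) (hu : ∃ u, x < u) :
    AccPt x (𝓟 S) := by
  rw [accPt_iff_nhds]
  intro U hU
  obtain ⟨u, hxu, hsub⟩ := exists_Ico_subset_of_mem_nhds hU hu
  obtain ⟨p, hpS, hxp, hpu⟩ := h u hxu
  exact ⟨p, ⟨hsub ⟨hxp.le, hpu⟩, hpS⟩, hxp.ne'⟩

set_option maxHeartbeats 1000000 in
/-- An uncountable set of reals has two distinct condensation points belonging to the set. -/
lemma exists_two_condensation {A : Set ℝ} (hA : ¬ A.Countable) :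
    ∃ c₁ ∈ A, ∃ c₂ ∈ A, c₁ ≠ c₂ ∧
      (∀ u < c₁, ∀ v, c₁ < v → ¬ (A ∩ Set.Ioo u v).Countable) ∧
      (∀ u < c₂, ∀ v, c₂ < v → ¬ (A ∩ Set.Ioo u v).Countable) := by
  set T := {x ∈ A | ∀ u < x, ∀ v, x < v → ¬ (A ∩ Set.Ioo u v).Countable} with hT
  have hdiff : (A \ T).Countable := by
    have hsub : A \ T ⊆
        ⋃ p ∈ {p : ℚ × ℚ | (A ∩ Set.Ioo (p.1 : ℝ) (p.2 : ℝ)).Countable},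
          A ∩ Set.Ioo (p.1 : ℝ) (p.2 : ℝ) := by
      rintro x ⟨hxA, hxT⟩
      have : ¬ (∀ u < x, ∀ v, x < v → ¬ (A ∩ Set.Ioo u v).Countable) := fun h => hxT ⟨hxA, h⟩
      push_neg at this
      obtain ⟨u, hu, v, hv, hcnt⟩ := this
      obtain ⟨q, hq1, hq2⟩ := exists_rat_btwn hu
      obtain ⟨r, hr1, hr2⟩ := exists_rat_btwn hv
      have hmem : ((q, r) : ℚ × ℚ) ∈
          {p : ℚ × ℚ | (A ∩ Set.Ioo (p.1 : ℝ) (p.2 : ℝ)).Countable} :=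
        hcnt.mono (inter_subset_inter_right _ (Set.Ioo_subset_Ioo hq1.le hr2.le))
      exact mem_biUnion hmem ⟨hxA, hq2, hr1⟩
    have hcnt : (⋃ p ∈ {p : ℚ × ℚ | (A ∩ Set.Ioo (p.1 : ℝ) (p.2 : ℝ)).Countable},
        A ∩ Set.Ioo (p.1 : ℝ) (p.2 : ℝ)).Countable :=
      Set.Countable.biUnion (Set.to_countable
        {p : ℚ × ℚ | (A ∩ Set.Ioo (p.1 : ℝ) (p.2 : ℝ)).Countable}) fun p hp => hp
    exact hcnt.mono hsub
  have hTunc : ¬ T.Countable := by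
    intro h
    exact hA (((hdiff.union h).mono) fun x hx => by
      by_cases hxT : x ∈ T
      · exact Or.inr hxT
      · exact Or.inl ⟨hx, hxT⟩)
  have hnt : T.Nontrivial := by
    by_contra h
    exact hTunc (Set.not_nontrivial_iff.mp h).countable
  obtain ⟨c₁, h1, c₂, h2, hne⟩ := hnt
  exact ⟨c₁, h1.1, c₂, h2.1, hne, h1.2, h2.2⟩

/-- A condensation point is approached from the left or from the right by the set. -/
lemma cond_left_or_right {A : Set ℝ} {c : ℝ}
    (h : ∀ u < c, ∀ v, c < v → ¬ (A ∩ Set.Ioo u v).Countable) :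
    (∀ u < c, ∃ x ∈ A, u < x ∧ x < c) ∨ (∀ v, c < v → ∃ x ∈ A, c < x ∧ x < v) := by
  by_contra hc
  push_neg at hc
  obtain ⟨⟨u, hu, h1⟩, ⟨v, hv, h2⟩⟩ := hc
  apply h u hu v hv
  apply (Set.countable_singleton c).mono
  rintro x ⟨hxA, hx1, hx2⟩
  rcases lt_trichotomy x c with hlt | heq | hgt
  · exact absurd hlt (not_lt.mpr (h1 x hxA hx1))
  · exact heq
  · exact absurd hx2 (not_lt.mpr (h2 x hxA hgt))

section LexLemmas

/-- first coordinate, as a real number -/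
noncomputable def fst' (p : LexSquare) : ℝ := ((ofLex p).1 : ℝ)
/-- second coordinate, as a real number -/
noncomputable def snd' (p : LexSquare) : ℝ := ((ofLex p).2 : ℝ)

lemma zero_mem_I : (0:ℝ) ∈ Set.Icc (0:ℝ) 1 := by norm_num
lemma one_mem_I : (1:ℝ) ∈ Set.Icc (0:ℝ) 1 := by norm_num

lemma lex_lt_iff (p q : LexSquare) :
    p < q ↔ (ofLex p).1 < (ofLex q).1 ∨ (ofLex p).1 = (ofLex q).1 ∧ (ofLex p).2 < (ofLex q).2 :=
  Prod.Lex.lt_iff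

/-- Accumulation at the bottom of a column approached by columns from the left. -/
lemma accPt_col_left (S : Set LexSquare) (c : ℝ) (hcI : c ∈ Set.Icc (0:ℝ) 1)
    (h : ∀ u < c, ∃ p ∈ S, u < fst' p ∧ fst' p < c) :
    AccPt (toLex ((⟨c, hcI⟩ : Set.Icc (0:ℝ) 1), ⟨0, zero_mem_I⟩)) (𝓟 S) := by
  set x : LexSquare := toLex ((⟨c, hcI⟩ : Set.Icc (0:ℝ) 1), ⟨0, zero_mem_I⟩) with hx
  have key : ∀ l < x, ∃ p ∈ S, l < p ∧ p < x := by
    intro l hl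
    rcases (lex_lt_iff l x).mp hl with h1 | ⟨h1, h2⟩
    · obtain ⟨p, hpS, hup, hpc⟩ := h ((ofLex l).1 : ℝ) h1
      refine ⟨p, hpS, ?_, ?_⟩
      · exact (lex_lt_iff l p).mpr (Or.inl hup)
      · exact (lex_lt_iff p x).mpr (Or.inl hpc)
    · exact absurd ((ofLex l).2.2.1) (not_le.mpr h2)
  obtain ⟨p, hpS, _, hpc⟩ := h (c - 1) (by linarith)
  exact accPt_of_left key ⟨p, (lex_lt_iff p x).mpr (Or.inl hpc)⟩

/-- Accumulation at the top of a column approached by columns from the right. -/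
lemma accPt_col_right (S : Set LexSquare) (c : ℝ) (hcI : c ∈ Set.Icc (0:ℝ) 1)
    (h : ∀ v, c < v → ∃ p ∈ S, c < fst' p ∧ fst' p < v) :
    AccPt (toLex ((⟨c, hcI⟩ : Set.Icc (0:ℝ) 1), ⟨1, one_mem_I⟩)) (𝓟 S) := by
  set x : LexSquare := toLex ((⟨c, hcI⟩ : Set.Icc (0:ℝ) 1), ⟨1, one_mem_I⟩) with hx
  have key : ∀ u, x < u → ∃ p ∈ S, x < p ∧ p < u := by
    intro u hu
    rcases (lex_lt_iff x u).mp hu with h1 | ⟨h1, h2⟩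
    · obtain ⟨p, hpS, hcp, hpu⟩ := h ((ofLex u).1 : ℝ) h1
      refine ⟨p, hpS, ?_, ?_⟩
      · exact (lex_lt_iff x p).mpr (Or.inl hcp)
      · exact (lex_lt_iff p u).mpr (Or.inl hpu)
    · exact absurd ((ofLex u).2.2.2) (not_le.mpr h2)
  obtain ⟨p, hpS, hcp, _⟩ := h (c + 1) (by linarith)
  exact accPt_of_right key ⟨p, (lex_lt_iff x p).mpr (Or.inl hcp)⟩

/-- Accumulation inside a column, from below. -/
lemma accPt_fib_left (S : Set LexSquare) (c y : ℝ) (hcI : c ∈ Set.Icc (0:ℝ) 1)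
    (hyI : y ∈ Set.Icc (0:ℝ) 1)
    (h : ∀ u < y, ∃ p ∈ S, fst' p = c ∧ u < snd' p ∧ snd' p < y) :
    AccPt (toLex ((⟨c, hcI⟩ : Set.Icc (0:ℝ) 1), ⟨y, hyI⟩)) (𝓟 S) := by
  set x : LexSquare := toLex ((⟨c, hcI⟩ : Set.Icc (0:ℝ) 1), ⟨y, hyI⟩) with hx
  have hx1 : (ofLex x).1 = (⟨c, hcI⟩ : Set.Icc (0:ℝ) 1) := rfl
  have hx2 : (ofLex x).2 = (⟨y, hyI⟩ : Set.Icc (0:ℝ) 1) := rfl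
  have fstp : ∀ p : LexSquare, fst' p = c → (ofLex p).1 = (⟨c, hcI⟩ : Set.Icc (0:ℝ) 1) :=
    fun p hp => Subtype.ext hp
  have key : ∀ l < x, ∃ p ∈ S, l < p ∧ p < x := by
    intro l hl
    rcases (lex_lt_iff l x).mp hl with h1 | ⟨h1, h2⟩
    · obtain ⟨p, hpS, hfst, _, hlt⟩ := h (y - 1) (by linarith)
      refine ⟨p, hpS, ?_, ?_⟩
      · exact (lex_lt_iff l p).mpr (Or.inl (by rw [fstp p hfst, ← hx1]; exact h1))
      · exact (lex_lt_iff p x).mpr (Or.inr ⟨(fstp p hfst).trans hx1.symm, hlt⟩)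
    · obtain ⟨p, hpS, hfst, hgt, hlt⟩ := h ((ofLex l).2 : ℝ) h2
      refine ⟨p, hpS, ?_, ?_⟩
      · exact (lex_lt_iff l p).mpr (Or.inr ⟨h1.trans (hx1.trans (fstp p hfst).symm), hgt⟩)
      · exact (lex_lt_iff p x).mpr (Or.inr ⟨(fstp p hfst).trans hx1.symm, hlt⟩)
  obtain ⟨p, hpS, hfst, _, hlt⟩ := h (y - 1) (by linarith)
  exact accPt_of_left key ⟨p, (lex_lt_iff p x).mpr (Or.inr ⟨(fstp p hfst).trans hx1.symm, hlt⟩)⟩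

/-- Accumulation inside a column, from above. -/
lemma accPt_fib_right (S : Set LexSquare) (c y : ℝ) (hcI : c ∈ Set.Icc (0:ℝ) 1)
    (hyI : y ∈ Set.Icc (0:ℝ) 1)
    (h : ∀ v, y < v → ∃ p ∈ S, fst' p = c ∧ y < snd' p ∧ snd' p < v) :
    AccPt (toLex ((⟨c, hcI⟩ : Set.Icc (0:ℝ) 1), ⟨y, hyI⟩)) (𝓟 S) := by
  set x : LexSquare := toLex ((⟨c, hcI⟩ : Set.Icc (0:ℝ) 1), ⟨y, hyI⟩) with hx
  have hx1 : (ofLex x).1 = (⟨c, hcI⟩ : Set.Icc (0:ℝ) 1) := rfl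
  have fstp : ∀ p : LexSquare, fst' p = c → (ofLex p).1 = (⟨c, hcI⟩ : Set.Icc (0:ℝ) 1) :=
    fun p hp => Subtype.ext hp
  have key : ∀ u, x < u → ∃ p ∈ S, x < p ∧ p < u := by
    intro u hu
    rcases (lex_lt_iff x u).mp hu with h1 | ⟨h1, h2⟩
    · obtain ⟨p, hpS, hfst, hgt, _⟩ := h (y + 1) (by linarith)
      refine ⟨p, hpS, ?_, ?_⟩
      · exact (lex_lt_iff x p).mpr (Or.inr ⟨hx1.trans (fstp p hfst).symm, hgt⟩)
      · exact (lex_lt_iff p u).mpr (Or.inl (by rw [fstp p hfst, ← hx1]; exact h1))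
    · obtain ⟨p, hpS, hfst, hgt, hlt⟩ := h ((ofLex u).2 : ℝ) h2
      refine ⟨p, hpS, ?_, ?_⟩
      · exact (lex_lt_iff x p).mpr (Or.inr ⟨hx1.trans (fstp p hfst).symm, hgt⟩)
      · exact (lex_lt_iff p u).mpr (Or.inr ⟨(fstp p hfst).trans (hx1.symm.trans h1), hlt⟩)
  obtain ⟨p, hpS, hfst, hgt, _⟩ := h (y + 1) (by linarith)
  exact accPt_of_right key ⟨p, (lex_lt_iff x p).mpr (Or.inr ⟨hx1.trans (fstp p hfst).symm, hgt⟩)⟩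

/-- Every uncountable subset of the lex square has two distinct accumulation points. -/
lemma two_accPt (S : Set LexSquare) (hS : ¬ S.Countable) :
    ∃ a b : LexSquare, a ≠ b ∧ AccPt a (𝓟 S) ∧ AccPt b (𝓟 S) := by
  by_cases hA : (fst' '' S).Countable
  · -- some fiber is uncountable
    have hfib : ¬ ∀ a ∈ fst' '' S, ({p ∈ S | fst' p = a}).Countable := by
      intro h
      apply hS
      have hsub : S ⊆ ⋃ a ∈ fst' '' S, {p ∈ S | fst' p = a} := fun p hp =>
        mem_biUnion ⟨p, hp, rfl⟩ ⟨hp, rfl⟩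
      exact (hA.biUnion h).mono hsub
    push_neg at hfib
    obtain ⟨c, hcA, hF⟩ := hfib
    set F := {p ∈ S | fst' p = c} with hFdef
    have hcI : c ∈ Set.Icc (0:ℝ) 1 := by
      obtain ⟨p, _, rfl⟩ := hcA; exact (ofLex p).1.2
    have hBinj : Set.InjOn snd' F := by
      intro p hp q hq hpq
      have h1 : (ofLex p).1 = (ofLex q).1 := Subtype.ext (hp.2.trans hq.2.symm)
      have h2 : (ofLex p).2 = (ofLex q).2 := Subtype.ext hpq
      have : (ofLex p) = (ofLex q) := Prod.ext h1 h2
      calc p = toLex (ofLex p) := rfl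
        _ = toLex (ofLex q) := by rw [this]
        _ = q := rfl
    have hB : ¬ (snd' '' F).Countable := fun h =>
      hF (Set.countable_of_injective_of_countable_image hBinj h)
    obtain ⟨y₁, hy₁, y₂, hy₂, hyne, hc₁, hc₂⟩ := exists_two_condensation hB
    have hyI : ∀ y ∈ snd' '' F, y ∈ Set.Icc (0:ℝ) 1 := by
      rintro y ⟨p, _, rfl⟩; exact (ofLex p).2.2
    have dense_to_S : ∀ y : ℝ,
        ((∀ u < y, ∃ z ∈ snd' '' F, u < z ∧ z < y) →
          ∀ u < y, ∃ p ∈ S, fst' p = c ∧ u < snd' p ∧ snd' p < y) ∧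
        ((∀ v, y < v → ∃ z ∈ snd' '' F, y < z ∧ z < v) →
          ∀ v, y < v → ∃ p ∈ S, fst' p = c ∧ y < snd' p ∧ snd' p < v) := by
      intro y
      constructor
      · intro hd u hu
        obtain ⟨z, ⟨p, hpF, rfl⟩, hz1, hz2⟩ := hd u hu
        exact ⟨p, hpF.1, hpF.2, hz1, hz2⟩
      · intro hd v hv
        obtain ⟨z, ⟨p, hpF, rfl⟩, hz1, hz2⟩ := hd v hv
        exact ⟨p, hpF.1, hpF.2, hz1, hz2⟩
    have hacc : ∀ y (hy : y ∈ snd' '' F),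
        (∀ u < y, ∀ v, y < v → ¬ ((snd' '' F) ∩ Set.Ioo u v).Countable) →
        AccPt (toLex ((⟨c, hcI⟩ : Set.Icc (0:ℝ) 1), ⟨y, hyI y hy⟩)) (𝓟 S) := by
      intro y hy hcond
      rcases cond_left_or_right hcond with hL | hR
      · exact accPt_fib_left S c y hcI (hyI y hy) ((dense_to_S y).1 hL)
      · exact accPt_fib_right S c y hcI (hyI y hy) ((dense_to_S y).2 hR)
    refine ⟨_, _, ?_, hacc y₁ hy₁ hc₁, hacc y₂ hy₂ hc₂⟩
    intro h
    apply hyne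
    have := congrArg (fun z : LexSquare => ((ofLex z).2 : ℝ)) h
    simpa using this
  · -- the projection is uncountable
    obtain ⟨c₁, hc₁A, c₂, hc₂A, hcne, hcond₁, hcond₂⟩ := exists_two_condensation hA
    have hcI : ∀ c ∈ fst' '' S, c ∈ Set.Icc (0:ℝ) 1 := by
      rintro c ⟨p, _, rfl⟩; exact (ofLex p).1.2
    have dense_to_S : ∀ y : ℝ,
        ((∀ u < y, ∃ z ∈ fst' '' S, u < z ∧ z < y) →
          ∀ u < y, ∃ p ∈ S, u < fst' p ∧ fst' p < y) ∧
        ((∀ v, y < v → ∃ z ∈ fst' '' S, y < z ∧ z < v) →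
          ∀ v, y < v → ∃ p ∈ S, y < fst' p ∧ fst' p < v) := by
      intro y
      constructor
      · intro hd u hu
        obtain ⟨z, ⟨p, hpS, rfl⟩, hz1, hz2⟩ := hd u hu
        exact ⟨p, hpS, hz1, hz2⟩
      · intro hd v hv
        obtain ⟨z, ⟨p, hpS, rfl⟩, hz1, hz2⟩ := hd v hv
        exact ⟨p, hpS, hz1, hz2⟩
    have hacc : ∀ c (hc : c ∈ fst' '' S),
        (∀ u < c, ∀ v, c < v → ¬ ((fst' '' S) ∩ Set.Ioo u v).Countable) →
        ∃ a : LexSquare, ((ofLex a).1 : ℝ) = c ∧ AccPt a (𝓟 S) := by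
      intro c hc hcond
      rcases cond_left_or_right hcond with hL | hR
      · exact ⟨toLex ((⟨c, hcI c hc⟩ : Set.Icc (0:ℝ) 1), ⟨0, zero_mem_I⟩), rfl,
          accPt_col_left S c (hcI c hc) ((dense_to_S c).1 hL)⟩
      · exact ⟨toLex ((⟨c, hcI c hc⟩ : Set.Icc (0:ℝ) 1), ⟨1, one_mem_I⟩), rfl,
          accPt_col_right S c (hcI c hc) ((dense_to_S c).2 hR)⟩
    obtain ⟨a, ha1, ha2⟩ := hacc c₁ hc₁A hcond₁
    obtain ⟨b, hb1, hb2⟩ := hacc c₂ hc₂A hcond₂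
    refine ⟨a, b, ?_, ha2, hb2⟩
    intro h
    exact hcne (by rw [← ha1, ← hb1, h])

end LexLemmas

theorem stmt13 (Δ : Type*) [TopologicalSpace Δ] [DiscreteTopology Δ] [Uncountable Δ] :
    (∀ S : Set LexSquare, ¬ S.Countable →
      ∃ a b : LexSquare, a ≠ b ∧ AccPt a (𝓟 S) ∧ AccPt b (𝓟 S)) ∧
    ¬ ∃ f : OnePoint Δ → LexSquare, Topology.IsEmbedding f := by
  refine ⟨two_accPt, ?_⟩
  rintro ⟨f, hf⟩
  -- the image of the discrete part
  set S : Set LexSquare := f '' (Set.range ((↑) : Δ → OnePoint Δ)) with hSdef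
  have hSunc : ¬ S.Countable := by
    intro h
    have : S = Set.range (f ∘ ((↑) : Δ → OnePoint Δ)) := by
      rw [hSdef, ← Set.range_comp]
    rw [this] at h
    have hcnt : Countable Δ := by
      have := h.to_subtype
      have hinj : Function.Injective (fun x : Δ =>
          (⟨(f ∘ ((↑) : Δ → OnePoint Δ)) x, Set.mem_range_self x⟩ :
          Set.range (f ∘ ((↑) : Δ → OnePoint Δ)))) := by
        intro x y hxy
        have : f (x : OnePoint Δ) = f (y : OnePoint Δ) := congrArg Subtype.val hxy
        exact OnePoint.coe_injective (hf.injective this)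
      exact hinj.countable
    exact not_countable hcnt
  obtain ⟨a, b, hab, ha, hb⟩ := two_accPt S hSunc
  -- every accumulation point of S equals f OnePoint.infty
  have key : ∀ x : LexSquare, AccPt x (𝓟 S) → x = f OnePoint.infty := by
    intro x hx
    -- x is in the closure of S, which is inside the (compact, hence closed) range of f
    have hxcl : x ∈ closure S := by
      have := hx.clusterPt
      exact mem_closure_iff_clusterPt.mpr this
    have hrange : IsClosed (Set.range f) := by
      have hcomp : IsCompact (Set.range f) := by
        rw [← Set.image_univ]
        exact isCompact_univ.image hf.continuous
      exact hcomp.isClosed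
    have hxr : x ∈ Set.range f := by
      have : closure S ⊆ Set.range f := by
        apply closure_minimal _ hrange
        rintro y ⟨p, _, rfl⟩
        exact Set.mem_range_self p
      exact this hxcl
    obtain ⟨p, rfl⟩ := hxr
    rcases p with _ | q
    · rfl
    · -- p = some q is isolated; contradiction with accumulation
      exfalso
      have hopen : IsOpen ({(q : OnePoint Δ)} : Set (OnePoint Δ)) := by
        rw [OnePoint.isOpen_iff_of_notMem (by simp)]
        have : ((↑) : Δ → OnePoint Δ) ⁻¹' {(q : OnePoint Δ)} = {q} := by
          ext z; simp
        rw [this]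
        exact isOpen_discrete _
      -- pull back to LexSquare via the embedding
      obtain ⟨V, hVopen, hVeq⟩ := hf.isInducing.isOpen_iff.mp hopen
      have hVmem : V ∈ 𝓝 (f (q : OnePoint Δ)) := hVopen.mem_nhds (by
        have : (q : OnePoint Δ) ∈ f ⁻¹' V := by rw [hVeq]; rfl
        exact this)
      rw [accPt_iff_nhds] at hx
      obtain ⟨y, ⟨hyV, hyS⟩, hyne⟩ := hx V hVmem
      obtain ⟨r, ⟨d, rfl⟩, rfl⟩ := hyS
      have : (d : OnePoint Δ) ∈ f ⁻¹' V := hyV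
      rw [hVeq] at this
      exact hyne (by rw [Set.mem_singleton_iff.mp this]; rfl)
  exact hab ((key a ha).trans (key b hb).symm)
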